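/- Let E be jointly convex on ℝ^m × ℝ^n × ℝ^{m×n}, constrained so that c lies in a closed convex set C, and suppose E attains a minimum at φ* = (α*, β*, c*) over ℝ^m × ℝ^n × C. If the tangent cone of ℝ^m × ℝ^n × C at φ* intersects ker(J) only at 0, where Jφ is the matrix (α_i + β_j − c_{ij})_{ij}, then φ* is the unique minimizer of E over ℝ^m × ℝ^n × C. -/

import Mathlib

open Real BigOperators

set_option maxHeartbeats 1000000 in
theorem stmt_7 (m n : ℕ) (ε : ℝ) (hε : 0 < ε)
    (μ : Fin m → ℝ) (ν : Fin n → ℝ) (πh : Matrix (Fin m) (Fin n) ℝ)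
    (C : Set (Matrix (Fin m) (Fin n) ℝ)) (hCclosed : IsClosed C) (hCconv : Convex ℝ C)
    (E : (Fin m → ℝ) × (Fin n → ℝ) × Matrix (Fin m) (Fin n) ℝ → ℝ)
    (hE : E = fun p =>
      (∑ i, ∑ j, p.2.2 i j * πh i j) - (∑ i, p.1 i * μ i) - (∑ j, p.2.1 j * ν j)
        + ε * ∑ i, ∑ j, Real.exp ((p.1 i + p.2.1 j - p.2.2 i j) / ε))
    (hconv : ConvexOn ℝ Set.univ E)
    (S : Set ((Fin m → ℝ) × (Fin n → ℝ) × Matrix (Fin m) (Fin n) ℝ))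
    (hS : S = {p | p.2.2 ∈ C})
    (φs : (Fin m → ℝ) × (Fin n → ℝ) × Matrix (Fin m) (Fin n) ℝ)
    (hmem : φs ∈ S) (hmin : ∀ φ ∈ S, E φs ≤ E φ)
    (hker : ∀ ψ ∈ tangentConeAt ℝ S φs,
      (∀ i j, ψ.1 i + ψ.2.1 j - ψ.2.2 i j = 0) → ψ = 0) :
    ∀ φ ∈ S, E φ ≤ E φs → φ = φs := by
  intro φ hφ hle
  have hEeq : E φ = E φs := le_antisymm hle (hmin φ hφ)
  -- midpoint
  set mid := (1/2 : ℝ) • φs + (1/2 : ℝ) • φ with hmid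
  have hmidS : mid ∈ S := by
    rw [hS]
    have := hCconv (hS ▸ hmem) (hS ▸ hφ) (by norm_num : (0:ℝ) ≤ 1/2)
      (by norm_num : (0:ℝ) ≤ 1/2) (by norm_num)
    exact this
  have hub : E mid ≤ (1/2 : ℝ) * E φs + (1/2 : ℝ) * E φ :=
    hconv.2 (Set.mem_univ φs) (Set.mem_univ φ) (by norm_num) (by norm_num) (by norm_num)
  have hEmid : E mid = E φs := le_antisymm (by rw [hEeq] at hub; linarith) (hmin mid hmidS)
  -- notation for the exponents
  set a : Fin m → Fin n → ℝ := fun i j => (φ.1 i + φ.2.1 j - φ.2.2 i j) / ε with ha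
  set b : Fin m → Fin n → ℝ := fun i j => (φs.1 i + φs.2.1 j - φs.2.2 i j) / ε with hb
  have hmid1 : ∀ i, mid.1 i = (1/2) * φs.1 i + (1/2) * φ.1 i := fun i => rfl
  have hmid21 : ∀ j, mid.2.1 j = (1/2) * φs.2.1 j + (1/2) * φ.2.1 j := fun j => rfl
  have hmid22 : ∀ i j, mid.2.2 i j = (1/2) * φs.2.2 i j + (1/2) * φ.2.2 i j := fun i j => rfl
  have hmidexp : ∀ i j, (mid.1 i + mid.2.1 j - mid.2.2 i j) / ε = (a i j + b i j) / 2 := by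
    intro i j
    rw [hmid1, hmid21, hmid22, ha, hb]
    field_simp
    ring
  -- per-term convexity of exp
  have hterm : ∀ i j, Real.exp ((a i j + b i j) / 2)
      ≤ (1/2) * Real.exp (a i j) + (1/2) * Real.exp (b i j) := by
    intro i j
    have := convexOn_exp.2 (Set.mem_univ (a i j)) (Set.mem_univ (b i j))
      (by norm_num : (0:ℝ) ≤ 1/2) (by norm_num : (0:ℝ) ≤ 1/2) (by norm_num)
    rw [show (a i j + b i j)/2 = (1/2:ℝ) * a i j + (1/2) * b i j by ring]
    simpa [smul_eq_mul] using this
  -- derive equality of sums of exponentials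
  have hsum : ∑ i, ∑ j, Real.exp ((a i j + b i j) / 2)
      = ∑ i, ∑ j, ((1/2) * Real.exp (a i j) + (1/2) * Real.exp (b i j)) := by
    have h1 : E mid = (∑ i, ∑ j, mid.2.2 i j * πh i j) - (∑ i, mid.1 i * μ i)
        - (∑ j, mid.2.1 j * ν j) + ε * ∑ i, ∑ j, Real.exp ((a i j + b i j) / 2) := by
      rw [hE]
      simp only
      congr 1
      refine congrArg (ε * ·) ?_
      exact Finset.sum_congr rfl fun i _ => Finset.sum_congr rfl fun j _ => by
        rw [hmidexp i j]
    have h2 : E φ = (∑ i, ∑ j, φ.2.2 i j * πh i j) - (∑ i, φ.1 i * μ i)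
        - (∑ j, φ.2.1 j * ν j) + ε * ∑ i, ∑ j, Real.exp (a i j) := by rw [hE]
    have h3 : E φs = (∑ i, ∑ j, φs.2.2 i j * πh i j) - (∑ i, φs.1 i * μ i)
        - (∑ j, φs.2.1 j * ν j) + ε * ∑ i, ∑ j, Real.exp (b i j) := by rw [hE]
    -- linear parts of mid
    have hl1 : (∑ i, ∑ j, mid.2.2 i j * πh i j)
        = (1/2) * (∑ i, ∑ j, φs.2.2 i j * πh i j) + (1/2) * (∑ i, ∑ j, φ.2.2 i j * πh i j) := by
      simp only [hmid22, add_mul, Finset.sum_add_distrib, Finset.mul_sum, mul_assoc]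
    have hl2 : (∑ i, mid.1 i * μ i)
        = (1/2) * (∑ i, φs.1 i * μ i) + (1/2) * (∑ i, φ.1 i * μ i) := by
      simp only [hmid1, add_mul, Finset.sum_add_distrib, Finset.mul_sum, mul_assoc]
    have hl3 : (∑ j, mid.2.1 j * ν j)
        = (1/2) * (∑ j, φs.2.1 j * ν j) + (1/2) * (∑ j, φ.2.1 j * ν j) := by
      simp only [hmid21, add_mul, Finset.sum_add_distrib, Finset.mul_sum, mul_assoc]
    have hsplit : ∑ i, ∑ j, ((1/2) * Real.exp (a i j) + (1/2) * Real.exp (b i j))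
        = (1/2) * (∑ i, ∑ j, Real.exp (a i j)) + (1/2) * (∑ i, ∑ j, Real.exp (b i j)) := by
      simp only [Finset.sum_add_distrib, Finset.mul_sum]
    rw [h1, hl1, hl2, hl3] at hEmid
    rw [h2, h3] at hEeq
    rw [h3] at hEmid
    rw [hsplit]
    have hε' : ε ≠ 0 := ne_of_gt hε
    refine mul_left_cancel₀ hε' ?_
    linarith [hEmid, hEeq]
  -- per-term equality
  have htermeq : ∀ i j, Real.exp ((a i j + b i j) / 2)
      = (1/2) * Real.exp (a i j) + (1/2) * Real.exp (b i j) := by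
    by_contra hcon
    push_neg at hcon
    obtain ⟨i, j, hij⟩ := hcon
    have : ∑ i, ∑ j, Real.exp ((a i j + b i j) / 2)
        < ∑ i, ∑ j, ((1/2) * Real.exp (a i j) + (1/2) * Real.exp (b i j)) := by
      refine Finset.sum_lt_sum (fun i _ => Finset.sum_le_sum fun j _ => hterm i j) ?_
      refine ⟨i, Finset.mem_univ i, ?_⟩
      refine Finset.sum_lt_sum (fun j _ => hterm i j) ⟨j, Finset.mem_univ j,
        lt_of_le_of_ne (hterm i j) hij⟩
    exact absurd hsum (ne_of_lt this)
  -- a = b entrywise by strict convexity of exp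
  have hab : ∀ i j, a i j = b i j := by
    intro i j
    by_contra hne
    have := strictConvexOn_exp.2 (Set.mem_univ (a i j)) (Set.mem_univ (b i j)) hne
      (by norm_num : (0:ℝ) < 1/2) (by norm_num : (0:ℝ) < 1/2) (by norm_num)
    rw [smul_eq_mul, smul_eq_mul,
      show (1/2 : ℝ) * a i j + (1/2) * b i j = (a i j + b i j)/2 by ring] at this
    exact absurd (htermeq i j) (ne_of_lt this)
  -- the difference is in the tangent cone and in the kernel
  have htc : φ - φs ∈ tangentConeAt ℝ S φs := by
    refine mem_tangentConeAt_of_seq Filter.atTop (fun k => (2:ℝ)^k) (fun k => ((2:ℝ)^k)⁻¹ • (φ - φs))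
      (tangentConeAt.lim_zero Filter.atTop ?hc ?hcd) ?hds ?hcd
    case' hds => skip
    · refine Filter.Eventually.of_forall fun k => ?_
      rw [hS]
      show (φs + ((2:ℝ)^k)⁻¹ • (φ - φs)).2.2 ∈ C
      have h1 : (0:ℝ) ≤ ((2:ℝ)^k)⁻¹ := by positivity
      have h2 : ((2:ℝ)^k)⁻¹ ≤ 1 := by
        rw [inv_le_one_iff₀]; right; exact one_le_pow₀ (by norm_num)
      have := hCconv (hS ▸ hmem) (hS ▸ hφ) (by linarith : (0:ℝ) ≤ 1 - ((2:ℝ)^k)⁻¹) h1 (by ring)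
      convert this using 1
      show φs.2.2 + ((2:ℝ)^k)⁻¹ • (φ.2.2 - φs.2.2) = _
      simp only [smul_sub, sub_smul, one_smul]
      abel
    · simp only [Real.norm_eq_abs, abs_pow, abs_two]
      exact tendsto_pow_atTop_atTop_of_one_lt (by norm_num)
    · have : ∀ k, (2:ℝ)^k • ((2:ℝ)^k)⁻¹ • (φ - φs) = φ - φs := by
        intro k
        rw [smul_smul, mul_inv_cancel₀ (by positivity), one_smul]
      simp only [this]
      exact tendsto_const_nhds
  have hzero : φ - φs = 0 := by
    refine hker _ htc fun i j => ?_
    have := hab i j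
    rw [ha, hb] at this
    have hε' : ε ≠ 0 := ne_of_gt hε
    show (φ.1 - φs.1) i + (φ.2.1 - φs.2.1) j - (φ.2.2 - φs.2.2) i j = 0
    field_simp at this
    simp only [Pi.sub_apply, Matrix.sub_apply]
    linarith
  exact sub_eq_zero.mp hzero
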